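/- If a pure state ψ on H_A ⊗ H_B ⊗ H_C ⊗ H_D factorizes as a product across the bipartitions (AB,CD) and (AD,BC), then its reduced density matrix on A⊗D is a product ρ_A ⊗ ρ_D and has rank 1, hence ρ_A and ρ_D are both pure. -/

import Mathlib

open Kronecker

/-- Reduced density matrix of a four-party pure state (in coordinates) on `A ⊗ D`:
partial trace of `|ψ⟩⟨ψ|` over `H_B ⊗ H_C`. -/
noncomputable def rhoAD {nA nB nC nD : ℕ}
    (ψ : Fin nA × Fin nB × Fin nC × Fin nD → ℂ) :
    Matrix (Fin nA × Fin nD) (Fin nA × Fin nD) ℂ :=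
  Matrix.of fun p q =>
    ∑ b : Fin nB, ∑ c : Fin nC,
      ψ (p.1, b, c, p.2) * (starRingEnd ℂ) (ψ (q.1, b, c, q.2))

/-- A nonzero `vecMulVec` matrix (witnessed by a nonzero entry) has rank one. -/
lemma rank_vecMulVec_eq_one {m : Type*} [Fintype m] [DecidableEq m]
    (x y : m → ℂ) (i j : m) (h : x i * y j ≠ 0) :
    (Matrix.vecMulVec x y).rank = 1 := by
  have hle : (Matrix.vecMulVec x y).rank ≤ 1 := by
    rw [Matrix.vecMulVec_eq (Fin 1)]
    calc (Matrix.replicateCol (Fin 1) x * Matrix.replicateRow (Fin 1) y).rank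
        ≤ (Matrix.replicateCol (Fin 1) x).rank := Matrix.rank_mul_le_left _ _
      _ ≤ Fintype.card (Fin 1) := Matrix.rank_le_card_width _
      _ = 1 := by simp
  have hne : (Matrix.vecMulVec x y).rank ≠ 0 := by
    intro h0
    have hrange : LinearMap.range (Matrix.vecMulVec x y).mulVecLin = ⊥ := by
      rw [← Submodule.finrank_eq_zero (R := ℂ)]
      exact h0
    have hmem : (Matrix.vecMulVec x y).mulVec (Pi.single j 1) ∈
        LinearMap.range (Matrix.vecMulVec x y).mulVecLin :=
      ⟨Pi.single j 1, rfl⟩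
    rw [hrange, Submodule.mem_bot] at hmem
    have := congrFun hmem i
    simp [Matrix.mulVec_single, Matrix.vecMulVec_apply] at this
    exact h (mul_eq_zero.mpr this)
  omega

theorem rhoAD_product_and_rank_one
    (nA nB nC nD : ℕ) (ψ : Fin nA × Fin nB × Fin nC × Fin nD → ℂ)
    (hnorm : ∑ x : Fin nA × Fin nB × Fin nC × Fin nD, Complex.normSq (ψ x) = 1)
    (hABCD : ∃ (u : Fin nA × Fin nB → ℂ) (v : Fin nC × Fin nD → ℂ),
      ∀ a b c d, ψ (a, b, c, d) = u (a, b) * v (c, d))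
    (hADBC : ∃ (u : Fin nA × Fin nD → ℂ) (v : Fin nB × Fin nC → ℂ),
      ∀ a b c d, ψ (a, b, c, d) = u (a, d) * v (b, c)) :
    ∃ (ρA : Matrix (Fin nA) (Fin nA) ℂ) (ρD : Matrix (Fin nD) (Fin nD) ℂ),
      rhoAD ψ = ρA ⊗ₖ ρD ∧ (rhoAD ψ).rank = 1 ∧ ρA.rank = 1 ∧ ρD.rank = 1 := by
  classical
  -- ψ is nonzero somewhere
  obtain ⟨x0, hx0⟩ : ∃ x, ψ x ≠ 0 := by
    by_contra h
    push_neg at h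
    simp [h] at hnorm
  obtain ⟨a0, b0, c0, d0⟩ := x0
  obtain ⟨u1, v1, h1⟩ := hABCD
  obtain ⟨u2, v2, h2⟩ := hADBC
  have hv2 : v2 (b0, c0) ≠ 0 := by
    intro h
    exact hx0 (by rw [h2, h, mul_zero])
  set f : Fin nA → ℂ := fun a => u1 (a, b0) with hf
  set g : Fin nD → ℂ := fun d => v1 (c0, d) with hg
  set w : Fin nB × Fin nC → ℂ := fun bc => v2 bc / v2 (b0, c0) with hw
  -- key factorization ψ (a,b,c,d) = f a * g d * w (b,c)
  have key : ∀ a b c d, ψ (a, b, c, d) = f a * g d * w (b, c) := by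
    intro a b c d
    have e1 : f a * g d = u2 (a, d) * v2 (b0, c0) := by
      rw [hf, hg]
      simpa using (h1 a b0 c0 d).symm.trans (h2 a b0 c0 d)
    rw [h2, hw]
    field_simp [e1]
    linear_combination (-v2 (b, c)) * e1
  have hψ0 : f a0 * g d0 * w (b0, c0) ≠ 0 := by rw [← key]; exact hx0
  have hfa0 : f a0 ≠ 0 := fun h => hψ0 (by simp [h])
  have hgd0 : g d0 ≠ 0 := fun h => hψ0 (by simp [h])
  set S : ℝ := ∑ b : Fin nB, ∑ c : Fin nC, Complex.normSq (w (b, c)) with hS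
  have hSpos : 0 < S := by
    have h1' : Complex.normSq (w (b0, c0)) = 1 := by
      simp [hw, div_self hv2]
    have : (1 : ℝ) ≤ S := by
      calc (1:ℝ) = Complex.normSq (w (b0, c0)) := h1'.symm
        _ ≤ ∑ c : Fin nC, Complex.normSq (w (b0, c)) :=
            Finset.single_le_sum (f := fun c => Complex.normSq (w (b0, c))) (fun c _ => Complex.normSq_nonneg _) (Finset.mem_univ c0)
        _ ≤ S := Finset.single_le_sum (f := fun b => ∑ c : Fin nC, Complex.normSq (w (b, c)))
            (fun b _ => Finset.sum_nonneg fun c _ => Complex.normSq_nonneg _)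
            (Finset.mem_univ b0)
    linarith
  have hSne : (S : ℂ) ≠ 0 := by
    exact_mod_cast ne_of_gt hSpos
  refine ⟨Matrix.vecMulVec (fun a => (S : ℂ) * f a) (fun a => (starRingEnd ℂ) (f a)),
      Matrix.vecMulVec g (fun d => (starRingEnd ℂ) (g d)), ?_, ?_, ?_, ?_⟩
  · ext ⟨a, d⟩ ⟨a', d'⟩
    simp only [rhoAD, Matrix.of_apply, Matrix.kroneckerMap_apply, Matrix.vecMulVec_apply]
    calc ∑ b : Fin nB, ∑ c : Fin nC,
          ψ (a, b, c, d) * (starRingEnd ℂ) (ψ (a', b, c, d'))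
        = ∑ b : Fin nB, ∑ c : Fin nC,
            (f a * (starRingEnd ℂ) (f a') * (g d * (starRingEnd ℂ) (g d'))) *
              ((Complex.normSq (w (b, c)) : ℂ)) := by
          refine Finset.sum_congr rfl fun b _ => Finset.sum_congr rfl fun c _ => ?_
          rw [key, key, map_mul, map_mul, ← Complex.mul_conj]
          ring
      _ = (f a * (starRingEnd ℂ) (f a') * (g d * (starRingEnd ℂ) (g d'))) * (S : ℂ) := by
          simp_rw [← Finset.mul_sum]
          rw [hS]
          push_cast
          ring
      _ = (S : ℂ) * f a * (starRingEnd ℂ) (f a') * (g d * (starRingEnd ℂ) (g d')) := by ring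
  · -- rank of rhoAD
    have hrw : rhoAD ψ = Matrix.vecMulVec
        (fun p : Fin nA × Fin nD => (S : ℂ) * f p.1 * g p.2)
        (fun q : Fin nA × Fin nD => (starRingEnd ℂ) (f q.1 * g q.2)) := by
      ext ⟨a, d⟩ ⟨a', d'⟩
      simp only [rhoAD, Matrix.of_apply, Matrix.vecMulVec_apply]
      calc ∑ b : Fin nB, ∑ c : Fin nC,
            ψ (a, b, c, d) * (starRingEnd ℂ) (ψ (a', b, c, d'))
          = ∑ b : Fin nB, ∑ c : Fin nC,
              (f a * (starRingEnd ℂ) (f a') * (g d * (starRingEnd ℂ) (g d'))) *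
                ((Complex.normSq (w (b, c)) : ℂ)) := by
            refine Finset.sum_congr rfl fun b _ => Finset.sum_congr rfl fun c _ => ?_
            rw [key, key, map_mul, map_mul, ← Complex.mul_conj]
            ring
        _ = (f a * (starRingEnd ℂ) (f a') * (g d * (starRingEnd ℂ) (g d'))) * (S : ℂ) := by
            simp_rw [← Finset.mul_sum]
            rw [hS]
            push_cast
            ring
        _ = ((S : ℂ) * f a * g d) * (starRingEnd ℂ) (f a' * g d') := by
            rw [map_mul]; ring
    rw [hrw]
    refine rank_vecMulVec_eq_one _ _ (a0, d0) (a0, d0) ?_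
    simp only [map_mul]
    apply mul_ne_zero
    · exact mul_ne_zero (mul_ne_zero hSne hfa0) hgd0
    · exact mul_ne_zero (by simpa using hfa0) (by simpa using hgd0)
  · refine rank_vecMulVec_eq_one _ _ a0 a0 ?_
    exact mul_ne_zero (mul_ne_zero hSne hfa0) (by simpa using hfa0)
  · refine rank_vecMulVec_eq_one _ _ d0 d0 ?_
    exact mul_ne_zero hgd0 (by simpa using hgd0)
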